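/- If f : (0,∞) → (0,∞) satisfies (1-z)·f(x) = f(f(xz)·(1-z)/z) for all x > 0 and 0 < z < 1, then the function x ↦ f(x)/x is monotonically non-increasing on (0,∞). -/

import Mathlib

theorem stmt2 (f : ℝ → ℝ) (hpos : ∀ x : ℝ, 0 < x → 0 < f x)
    (heq : ∀ x : ℝ, 0 < x → ∀ z : ℝ, 0 < z → z < 1 →
      (1 - z) * f x = f (f (x * z) * ((1 - z) / z))) :
    ∀ x y : ℝ, 0 < x → 0 < y → x ≤ y → f y / y ≤ f x / x := by
  have key : ∀ u : ℝ, 0 < u → ∀ s : ℝ, 0 < s →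
      s / (1 + s) * f (u * (1 + s)) = f (s * f u) := by
    intro u hu s hs
    have h1s : (0:ℝ) < 1 + s := by linarith
    have hz0 : (0:ℝ) < 1 / (1 + s) := by positivity
    have hz1 : 1 / (1 + s) < 1 := by
      rw [div_lt_one h1s]; linarith
    have h := heq (u * (1 + s)) (by positivity) (1/(1+s)) hz0 hz1
    have e1 : u * (1 + s) * (1/(1+s)) = u := by field_simp
    have e2 : (1 - 1/(1+s)) / (1/(1+s)) = s := by field_simp; ring
    have e3 : (1 - 1/(1+s)) = s/(1+s) := by field_simp; ring
    rw [e1, e2, e3, mul_comm (f u) s] at h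
    exact h
  have fle : ∀ w : ℝ, 0 < w → f w ≤ w := by
    intro w hw
    by_contra h
    push_neg at h
    have hfw : 0 < f w := hpos w hw
    have hd : 0 < f w - w := by linarith
    set s := w / (f w - w) with hs
    have hs0 : 0 < s := by positivity
    have hsf : s * f w = w * (1 + s) := by
      have hne : f w - w ≠ 0 := ne_of_gt hd
      rw [hs]; field_simp; ring
    have hk := key w hw s hs0
    rw [hsf] at hk
    have h1s : (0:ℝ) < 1 + s := by linarith
    have hp : 0 < f (w * (1 + s)) := hpos _ (by positivity)
    have hlt : s / (1 + s) < 1 := by rw [div_lt_one h1s]; linarith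
    nlinarith [hk, mul_lt_mul_of_pos_right hlt hp]
  intro x y hx hy hxy
  rcases eq_or_lt_of_le hxy with rfl | hlt
  · exact le_rfl
  · set s := y / x - 1 with hs
    have hs0 : 0 < s := by
      have : 1 < y / x := (one_lt_div hx).mpr hlt
      simp [hs]; linarith
    have hyx : y = x * (1 + s) := by rw [hs]; field_simp; ring
    have hk := key x hx s hs0
    have hfx : 0 < f x := hpos x hx
    have hle := fle (s * f x) (by positivity)
    rw [← hk, ← hyx] at hle
    have h1s : (0:ℝ) < 1 + s := by linarith
    have hfy : f y ≤ (1 + s) * f x := by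
      rw [div_mul_eq_mul_div, div_le_iff₀ h1s] at hle
      nlinarith
    rw [div_le_div_iff₀ hy hx]
    nlinarith
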